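/- Internal sellers of alternating paths remain matched after removing their partner: let G = (B, S, E) be a finite bipartite graph, b : B → ℝ and s : S → ℝ, and define node weights W(i) = b_i and W(j) = −s_j, and W₁(i) = φ_i and W₁(j) = −s_j, where φ_i ≤ b_i for every buyer i. Suppose M is the unique matching of maximum node-based weight with respect to W, M₁ is the unique matching of maximum node-based weight with respect to W₁, and for every buyer i the matching of maximum node-based weight with respect to W among matchings leaving i uncovered is unique. Let A be a maximal alternating path of M ∪ M₁ that is not a cycle, let j ∈ S be a seller on A that is not an endpoint of A, and let i be the buyer with (i,j) ∈ M. Then j is covered by the maximum-weight (with respect to W) matching among matchings leaving i uncovered. -/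

import Mathlib

/-- A matching of the bipartite graph with vertex sides `B`, `S` and edge relation `E`:
a finite set of edges (pairs) that are pairwise vertex-disjoint. -/
def IsBipMatching {B S : Type*} (E : B → S → Prop) (M : Finset (B × S)) : Prop :=
  (∀ p ∈ M, E p.1 p.2) ∧
  (∀ p ∈ M, ∀ q ∈ M, p.1 = q.1 → p = q) ∧
  (∀ p ∈ M, ∀ q ∈ M, p.2 = q.2 → p = q)

/-- The node-based weight of a matching for a node weight function `W` on `B ⊕ S`:
`∑_{(i,j) ∈ M} (W i + W j)`, i.e. the sum of `W` over all covered vertices. -/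
noncomputable def bipNodeWeight {B S : Type*} (W : B ⊕ S → ℝ) (M : Finset (B × S)) : ℝ :=
  ∑ p ∈ M, (W (Sum.inl p.1) + W (Sum.inr p.2))

/-- There is an edge of the edge set `M` between the vertices `u` and `v` of `B ⊕ S`. -/
def EdgeBetween {B S : Type*} (M : Finset (B × S)) (u v : B ⊕ S) : Prop :=
  ∃ p ∈ M, (u = Sum.inl p.1 ∧ v = Sum.inr p.2) ∨ (v = Sum.inl p.1 ∧ u = Sum.inr p.2)

private lemma bnw_eq {B S : Type*} (b : B → ℝ) (s : S → ℝ) (N : Finset (B × S)) :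
    bipNodeWeight (Sum.elim b fun j => -s j) N = ∑ q ∈ N, (b q.1 - s q.2) := by
  unfold bipNodeWeight
  exact Finset.sum_congr rfl fun q _ => by simp [sub_eq_add_neg]

private lemma bip_subset {B S : Type*} {E : B → S → Prop} {M N : Finset (B × S)}
    (h : IsBipMatching E M) (hs : N ⊆ M) : IsBipMatching E N :=
  ⟨fun p hp => h.1 p (hs hp), fun p hp q hq => h.2.1 p (hs hp) q (hs hq),
   fun p hp q hq => h.2.2 p (hs hp) q (hs hq)⟩

private lemma edgeBetween_symm {B S : Type*} {M : Finset (B × S)} {u v : B ⊕ S}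
    (h : EdgeBetween M u v) : EdgeBetween M v u := by
  obtain ⟨q, hq, h⟩ := h
  exact ⟨q, hq, h.symm⟩

private lemma aux_main {B S : Type*} [DecidableEq B] [DecidableEq S]
    (E : B → S → Prop) (b : B → ℝ) (s : S → ℝ) (φ : B → ℝ)
    (hφ : ∀ i, φ i ≤ b i)
    (M M₁ : Finset (B × S))
    (hM : IsBipMatching E M) (hM₁ : IsBipMatching E M₁)
    (hMmax : ∀ N, IsBipMatching E N →
      bipNodeWeight (Sum.elim b fun j => -s j) N ≤ bipNodeWeight (Sum.elim b fun j => -s j) M)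
    (hM₁max : ∀ N, IsBipMatching E N →
      bipNodeWeight (Sum.elim φ fun j => -s j) N ≤ bipNodeWeight (Sum.elim φ fun j => -s j) M₁)
    (hM₁uniq : ∀ N, IsBipMatching E N →
      bipNodeWeight (Sum.elim φ fun j => -s j) N = bipNodeWeight (Sum.elim φ fun j => -s j) M₁ →
      N = M₁)
    (Mminus : B → Finset (B × S))
    (hMm : ∀ i, IsBipMatching E (Mminus i))
    (hMmfree : ∀ i, ∀ p ∈ Mminus i, p.1 ≠ i)
    (hMmmax : ∀ i, ∀ N, IsBipMatching E N → (∀ p ∈ N, p.1 ≠ i) →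
      bipNodeWeight (Sum.elim b fun j => -s j) N ≤
        bipNodeWeight (Sum.elim b fun j => -s j) (Mminus i))
    (hMmuniq : ∀ i, ∀ N, IsBipMatching E N → (∀ p ∈ N, p.1 ≠ i) →
      bipNodeWeight (Sum.elim b fun j => -s j) N =
        bipNodeWeight (Sum.elim b fun j => -s j) (Mminus i) → N = Mminus i)
    (k l : ℕ) (c : ℕ → B ⊕ S)
    (hinj : ∀ a a', a ≤ k → a' ≤ k → c a = c a' → a = a')
    (hpath : ∀ m < k, EdgeBetween (M ∪ M₁) (c m) (c (m + 1)))
    (hmax0 : ∀ v, EdgeBetween (M ∪ M₁) (c 0) v → v = c 1)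
    (j : S) (i : B) (hij : (i, j) ∈ M)
    (hl : 0 < l) (hlk : l < k)
    (hcl : c l = Sum.inr j) (hci : c (l + 1) = Sum.inl i)
    (hjfree : ∀ q ∈ Mminus i, q.2 ≠ j) : False := by
  classical
  -- choose the path edges
  have hpath' : ∀ m, ∃ q : B × S, m < k → q ∈ M ∪ M₁ ∧
      ((c m = Sum.inl q.1 ∧ c (m + 1) = Sum.inr q.2) ∨
       (c (m + 1) = Sum.inl q.1 ∧ c m = Sum.inr q.2)) := by
    intro m
    by_cases hm : m < k
    · obtain ⟨q, hq1, hq2⟩ := hpath m hm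
      exact ⟨q, fun _ => ⟨hq1, hq2⟩⟩
    · exact ⟨(i, j), fun h => absurd h hm⟩
  choose p hp using hpath'
  -- vertex types along the path
  have hstep : ∀ m, m < k → ((∃ x, c m = Sum.inr x) ↔ ¬ ∃ x, c (m + 1) = Sum.inr x) := by
    intro m hm
    obtain ⟨-, hor⟩ := hp m hm
    rcases hor with ⟨h1, h2⟩ | ⟨h1, h2⟩
    · constructor
      · rintro ⟨x, hx⟩
        rw [h1] at hx
        simp at hx
      · intro h
        exact absurd ⟨_, h2⟩ h
    · refine ⟨fun _ => ?_, fun _ => ⟨_, h2⟩⟩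
      rintro ⟨x, hx⟩
      rw [h1] at hx
      simp at hx
  have htyAux : ∀ m, m ≤ k → ((∃ x, c m = Sum.inr x) ↔ (Even m ↔ ∃ x, c 0 = Sum.inr x)) := by
    intro m
    induction m with
    | zero =>
      intro _
      have h0 : Even (0 : ℕ) := Even.zero
      revert h0
      generalize (∃ x, c 0 = Sum.inr x) = A
      generalize Even (0 : ℕ) = D
      tauto
    | succ n ih =>
      intro hmk
      have h1 := hstep n (by omega)
      have h2 := ih (by omega)
      rw [Nat.even_add_one]
      revert h1 h2
      generalize (∃ x, c (n + 1) = Sum.inr x) = A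
      generalize (∃ x, c n = Sum.inr x) = Bp
      generalize (∃ x, c 0 = Sum.inr x) = C
      generalize Even n = D
      tauto
  have hty : ∀ m, m ≤ k → ((∃ x, c m = Sum.inr x) ↔ Even (l + m)) := by
    intro m hm
    have h0 := (htyAux l (by omega)).mp ⟨j, hcl⟩
    have h1 := htyAux m hm
    rw [Nat.even_add]
    revert h0 h1
    generalize (∃ x, c m = Sum.inr x) = A
    generalize (∃ x, c 0 = Sum.inr x) = C
    generalize Even l = D
    generalize Even m = Dm
    tauto
  -- orientation of the edges
  have horE : ∀ m, m < k → Even (l + m) →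
      c m = Sum.inr (p m).2 ∧ c (m + 1) = Sum.inl (p m).1 := by
    intro m hm hev
    obtain ⟨-, hor⟩ := hp m hm
    rcases hor with ⟨h1, h2⟩ | ⟨h1, h2⟩
    · exfalso
      obtain ⟨x, hx⟩ := (hty m (by omega)).mpr hev
      rw [h1] at hx
      simp at hx
    · exact ⟨h2, h1⟩
  have horO : ∀ m, m < k → ¬ Even (l + m) →
      c m = Sum.inl (p m).1 ∧ c (m + 1) = Sum.inr (p m).2 := by
    intro m hm hev
    obtain ⟨-, hor⟩ := hp m hm
    rcases hor with ⟨h1, h2⟩ | ⟨h1, h2⟩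
    · exact ⟨h1, h2⟩
    · exact absurd ((hty m (by omega)).mp ⟨_, h2⟩) hev
  -- base facts at the top of the segment
  have hevll : Even (l + l) := by rw [Nat.even_iff]; omega
  have hoddl1 : ¬ Even (l + (l - 1)) := by rw [Nat.even_iff]; omega
  have hsub1 : l - 1 + 1 = l := by omega
  have hB := horE l hlk hevll
  have hplj : (p l).2 = j := Sum.inr.inj (hB.1.symm.trans hcl)
  have hpli : (p l).1 = i := Sum.inl.inj (hB.2.symm.trans hci)
  have hpl : p l = (i, j) := Prod.ext hpli hplj
  have hA := horO (l - 1) (by omega) hoddl1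
  rw [hsub1] at hA
  have hpl1j : (p (l - 1)).2 = j := Sum.inr.inj (hA.2.symm.trans hcl)
  have hcne : c (l - 1) ≠ c (l + 1) := by
    intro h
    have := hinj _ _ (by omega) (by omega) h
    omega
  have hpl1nM : p (l - 1) ∉ M := by
    intro hmem
    have heq : p (l - 1) = (i, j) := hM.2.2 _ hmem _ hij hpl1j
    apply hcne
    rw [hA.1, heq, hci]
  have hpl1M₁ : p (l - 1) ∈ M₁ :=
    (Finset.mem_union.mp (hp (l - 1) (by omega)).1).resolve_left hpl1nM
  have hplnM₁ : p l ∉ M₁ := by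
    intro hmem
    have heq := hM₁.2.2 _ hmem _ hpl1M₁ (by rw [hplj, hpl1j])
    apply hcne
    rw [hA.1, hB.2, heq]
  have hplM : p l ∈ M := (Finset.mem_union.mp (hp l hlk).1).resolve_right hplnM₁
  -- strict alternation of edges along the segment [0, l]
  have haltAux : ∀ d, d ≤ l →
      ((Even (l + (l - d)) → p (l - d) ∈ M ∧ p (l - d) ∉ M₁) ∧
       (¬ Even (l + (l - d)) → p (l - d) ∈ M₁ ∧ p (l - d) ∉ M)) := by
    intro d
    induction d with
    | zero =>
      intro _
      simp only [Nat.sub_zero]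
      exact ⟨fun _ => ⟨hplM, hplnM₁⟩, fun h => absurd hevll h⟩
    | succ d ih =>
      intro hd
      have hdl : d ≤ l := by omega
      have hm1 : l - (d + 1) = l - d - 1 := by omega
      set m := l - d with hm
      have hmpos : 1 ≤ m := by omega
      have hmk : m < k := by omega
      have hm1k : m - 1 < k := by omega
      have hs : m - 1 + 1 = m := by omega
      rw [hm1]
      have ihm := ih hdl
      by_cases hev : Even (l + m)
      · obtain ⟨hpmM, -⟩ := ihm.1 hev
        have hodd : ¬ Even (l + (m - 1)) := by
          rw [Nat.even_iff] at hev ⊢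
          omega
        have h1 := horE m hmk hev
        have h2 := horO (m - 1) hm1k hodd
        rw [hs] at h2
        have hsell : (p (m - 1)).2 = (p m).2 := Sum.inr.inj (h2.2.symm.trans h1.1)
        have hnM : p (m - 1) ∉ M := by
          intro hmem
          have heq := hM.2.2 _ hmem _ hpmM hsell
          have hcc : c (m - 1) = c (m + 1) := by rw [h2.1, h1.2, heq]
          have := hinj _ _ (by omega) (by omega) hcc
          omega
        have hM₁mem : p (m - 1) ∈ M₁ :=
          (Finset.mem_union.mp (hp (m - 1) hm1k).1).resolve_left hnM
        exact ⟨fun h => absurd h hodd, fun _ => ⟨hM₁mem, hnM⟩⟩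
      · obtain ⟨hpmM₁, -⟩ := ihm.2 hev
        have hev' : Even (l + (m - 1)) := by
          rw [Nat.even_iff] at hev ⊢
          omega
        have h1 := horO m hmk hev
        have h2 := horE (m - 1) hm1k hev'
        rw [hs] at h2
        have hbuy : (p (m - 1)).1 = (p m).1 := Sum.inl.inj (h2.2.symm.trans h1.1)
        have hnM₁ : p (m - 1) ∉ M₁ := by
          intro hmem
          have heq := hM₁.2.1 _ hmem _ hpmM₁ hbuy
          have hcc : c (m - 1) = c (m + 1) := by rw [h2.1, h1.2, heq]
          have := hinj _ _ (by omega) (by omega) hcc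
          omega
        have hMmem : p (m - 1) ∈ M :=
          (Finset.mem_union.mp (hp (m - 1) hm1k).1).resolve_right hnM₁
        exact ⟨fun _ => ⟨hMmem, hnM₁⟩, fun h => absurd hev' h⟩
  have halt : ∀ m, m ≤ l →
      ((Even (l + m) → p m ∈ M ∧ p m ∉ M₁) ∧
       (¬ Even (l + m) → p m ∈ M₁ ∧ p m ∉ M)) := by
    intro m hm
    have := haltAux (l - m) (by omega)
    rwa [Nat.sub_sub_self hm] at this
  -- injectivity of edges on the segment
  have hpinj : ∀ x, x ≤ l → ∀ y, y ≤ l → p x = p y → x = y := by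
    intro x hx y hy heq
    by_cases h1 : Even (l + x) <;> by_cases h2 : Even (l + y)
    · have e1 := (horE x (by omega) h1).1
      have e2 := (horE y (by omega) h2).1
      refine hinj x y (by omega) (by omega) ?_
      rw [e1, e2, heq]
    · exact absurd (heq ▸ ((halt x hx).1 h1).1) ((halt y hy).2 h2).2
    · exact absurd (heq.symm ▸ ((halt y hy).1 h2).1) ((halt x hx).2 h1).2
    · have e1 := (horO x (by omega) h1).1
      have e2 := (horO y (by omega) h2).1
      refine hinj x y (by omega) (by omega) ?_
      rw [e1, e2, heq]
  -- index sets of M-edges and M₁-edges on the segment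
  set IM : Finset ℕ := (Finset.range (l + 1)).filter (fun m => Even (l + m)) with hIMdef
  set IM' : Finset ℕ := (Finset.range l).filter (fun m => Even (l + m)) with hIM'def
  set I₁ : Finset ℕ := (Finset.range l).filter (fun m => ¬ Even (l + m)) with hI₁def
  have hmemIM : ∀ m, m ∈ IM ↔ (m ≤ l ∧ Even (l + m)) := by
    intro m
    rw [hIMdef]
    simp [Finset.mem_filter, Finset.mem_range, Nat.lt_succ_iff]
  have hmemIM' : ∀ m, m ∈ IM' ↔ (m < l ∧ Even (l + m)) := by
    intro m
    rw [hIM'def]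
    simp [Finset.mem_filter, Finset.mem_range]
  have hmemI₁ : ∀ m, m ∈ I₁ ↔ (m < l ∧ ¬ Even (l + m)) := by
    intro m
    rw [hI₁def]
    simp [Finset.mem_filter, Finset.mem_range]
  set QM : Finset (B × S) := IM.image p with hQMdef
  set QM1 : Finset (B × S) := I₁.image p with hQM1def
  set QM2 : Finset (B × S) := IM'.image p with hQM2def
  have hmemQM : ∀ q, q ∈ QM ↔ ∃ m, (m ≤ l ∧ Even (l + m)) ∧ p m = q := by
    intro q
    rw [hQMdef, Finset.mem_image]
    constructor
    · rintro ⟨m, hm, rfl⟩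
      exact ⟨m, (hmemIM m).mp hm, rfl⟩
    · rintro ⟨m, hm, rfl⟩
      exact ⟨m, (hmemIM m).mpr hm, rfl⟩
  have hmemQM1 : ∀ q, q ∈ QM1 ↔ ∃ m, (m < l ∧ ¬ Even (l + m)) ∧ p m = q := by
    intro q
    rw [hQM1def, Finset.mem_image]
    constructor
    · rintro ⟨m, hm, rfl⟩
      exact ⟨m, (hmemI₁ m).mp hm, rfl⟩
    · rintro ⟨m, hm, rfl⟩
      exact ⟨m, (hmemI₁ m).mpr hm, rfl⟩
  have hmemQM2 : ∀ q, q ∈ QM2 ↔ ∃ m, (m < l ∧ Even (l + m)) ∧ p m = q := by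
    intro q
    rw [hQM2def, Finset.mem_image]
    constructor
    · rintro ⟨m, hm, rfl⟩
      exact ⟨m, (hmemIM' m).mp hm, rfl⟩
    · rintro ⟨m, hm, rfl⟩
      exact ⟨m, (hmemIM' m).mpr hm, rfl⟩
  have hQMsub : QM ⊆ M := by
    intro q hq
    obtain ⟨m, hm, rfl⟩ := (hmemQM q).mp hq
    exact ((halt m hm.1).1 hm.2).1
  have hQM1M₁ : ∀ q ∈ QM1, q ∈ M₁ := by
    intro q hq
    obtain ⟨m, hm, rfl⟩ := (hmemQM1 q).mp hq
    exact ((halt m (by omega)).2 hm.2).1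
  have hQM1nM : ∀ q ∈ QM1, q ∉ M := by
    intro q hq
    obtain ⟨m, hm, rfl⟩ := (hmemQM1 q).mp hq
    exact ((halt m (by omega)).2 hm.2).2
  have hQM2M : ∀ q ∈ QM2, q ∈ M := by
    intro q hq
    obtain ⟨m, hm, rfl⟩ := (hmemQM2 q).mp hq
    exact ((halt m (by omega)).1 hm.2).1
  have hQM2nM₁ : ∀ q ∈ QM2, q ∉ M₁ := by
    intro q hq
    obtain ⟨m, hm, rfl⟩ := (hmemQM2 q).mp hq
    exact ((halt m (by omega)).1 hm.2).2
  -- an M-edge sharing the seller of an M₁-segment edge lies in QM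
  have CS : ∀ q ∈ M, ∀ m, m < l → ¬ Even (l + m) → q.2 = (p m).2 → q ∈ QM := by
    intro q hq m hml hodd hq2
    have h1 := horO m (by omega) hodd
    have hev : Even (l + (m + 1)) := by
      rw [Nat.even_iff] at hodd ⊢
      omega
    have h2 := horE (m + 1) (by omega) hev
    have hsell : (p (m + 1)).2 = (p m).2 := Sum.inr.inj (h2.1.symm.trans h1.2)
    have hpm1M : p (m + 1) ∈ M := ((halt (m + 1) (by omega)).1 hev).1
    have heq : q = p (m + 1) := hM.2.2 q hq _ hpm1M (by rw [hq2, hsell])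
    rw [heq]
    exact (hmemQM _).mpr ⟨m + 1, ⟨by omega, hev⟩, rfl⟩
  -- an M-edge sharing the buyer of an M₁-segment edge lies in QM
  have CB : ∀ q ∈ M, ∀ m, m < l → ¬ Even (l + m) → q.1 = (p m).1 → q ∈ QM := by
    intro q hq m hml hodd hq1
    have h1 := horO m (by omega) hodd
    rcases Nat.eq_zero_or_pos m with rfl | hm0
    · exfalso
      have hedge : EdgeBetween (M ∪ M₁) (c 0) (Sum.inr q.2) :=
        ⟨q, Finset.mem_union_left _ hq, Or.inl ⟨by rw [h1.1, hq1], rfl⟩⟩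
      have h2 := hmax0 _ hedge
      have hq2 : q.2 = (p 0).2 := Sum.inr.inj (h2.trans h1.2)
      have heq : q = p 0 := Prod.ext hq1 hq2
      exact ((halt 0 (by omega)).2 hodd).2 (heq ▸ hq)
    · have hev : Even (l + (m - 1)) := by
        rw [Nat.even_iff] at hodd ⊢
        omega
      have h2 := horE (m - 1) (by omega) hev
      have hs : m - 1 + 1 = m := by omega
      rw [hs] at h2
      have hbuy : (p (m - 1)).1 = (p m).1 := Sum.inl.inj (h2.2.symm.trans h1.1)
      have hpm1M : p (m - 1) ∈ M := ((halt (m - 1) (by omega)).1 hev).1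
      have heq : q = p (m - 1) := hM.2.1 q hq _ hpm1M (by rw [hq1, hbuy])
      rw [heq]
      exact (hmemQM _).mpr ⟨m - 1, ⟨by omega, hev⟩, rfl⟩
  -- an M₁-edge sharing the buyer of an M-segment edge (below l) lies in QM1
  have CB' : ∀ q ∈ M₁, ∀ m, m < l → Even (l + m) → q.1 = (p m).1 → q ∈ QM1 := by
    intro q hq m hml hev hq1
    have h1 := horE m (by omega) hev
    have hodd : ¬ Even (l + (m + 1)) := by
      rw [Nat.even_iff] at hev ⊢
      omega
    have hmlt : m + 1 < l := by
      rcases Nat.lt_or_ge (m + 1) l with h | h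
      · exact h
      · exfalso
        have : m + 1 = l := by omega
        rw [Nat.even_iff] at hev
        omega
    have h2 := horO (m + 1) (by omega) hodd
    have hbuy : (p (m + 1)).1 = (p m).1 := Sum.inl.inj (h2.1.symm.trans h1.2)
    have hpm1 : p (m + 1) ∈ M₁ := ((halt (m + 1) (by omega)).2 hodd).1
    have heq : q = p (m + 1) := hM₁.2.1 q hq _ hpm1 (by rw [hq1, hbuy])
    rw [heq]
    exact (hmemQM1 _).mpr ⟨m + 1, ⟨hmlt, hodd⟩, rfl⟩
  -- an M₁-edge sharing the seller of an M-segment edge (below l) lies in QM1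
  have CS' : ∀ q ∈ M₁, ∀ m, m < l → Even (l + m) → q.2 = (p m).2 → q ∈ QM1 := by
    intro q hq m hml hev hq2
    have h1 := horE m (by omega) hev
    rcases Nat.eq_zero_or_pos m with rfl | hm0
    · exfalso
      have hedge : EdgeBetween (M ∪ M₁) (c 0) (Sum.inl q.1) :=
        ⟨q, Finset.mem_union_right _ hq, Or.inr ⟨rfl, by rw [h1.1, hq2]⟩⟩
      have h2 := hmax0 _ hedge
      have hq1 : q.1 = (p 0).1 := Sum.inl.inj (h2.trans h1.2)
      have heq : q = p 0 := Prod.ext hq1 hq2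
      exact ((halt 0 (by omega)).1 hev).2 (heq ▸ hq)
    · have hodd : ¬ Even (l + (m - 1)) := by
        rw [Nat.even_iff] at hev ⊢
        omega
      have h2 := horO (m - 1) (by omega) hodd
      have hs : m - 1 + 1 = m := by omega
      rw [hs] at h2
      have hsell : (p (m - 1)).2 = (p m).2 := Sum.inr.inj (h2.2.symm.trans h1.1)
      have hpm1 : p (m - 1) ∈ M₁ := ((halt (m - 1) (by omega)).2 hodd).1
      have heq : q = p (m - 1) := hM₁.2.2 q hq _ hpm1 (by rw [hq2, hsell])
      rw [heq]
      exact (hmemQM1 _).mpr ⟨m - 1, ⟨by omega, hodd⟩, rfl⟩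
  -- the two flipped matchings
  set N1 : Finset (B × S) := (M \ QM) ∪ QM1 with hN1def
  set N2 : Finset (B × S) := (M₁ \ QM1) ∪ QM2 with hN2def
  have hN1match : IsBipMatching E N1 := by
    refine ⟨?_, ?_, ?_⟩
    · intro q hq
      rcases Finset.mem_union.mp hq with h | h
      · exact hM.1 q (Finset.mem_sdiff.mp h).1
      · exact hM₁.1 q (hQM1M₁ q h)
    · intro q hq q' hq' h1
      rcases Finset.mem_union.mp hq with h | h <;> rcases Finset.mem_union.mp hq' with h' | h'
      · exact hM.2.1 q (Finset.mem_sdiff.mp h).1 q' (Finset.mem_sdiff.mp h').1 h1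
      · exfalso
        obtain ⟨m, hm, rfl⟩ := (hmemQM1 _).mp h'
        exact (Finset.mem_sdiff.mp h).2 (CB q (Finset.mem_sdiff.mp h).1 m hm.1 hm.2 h1)
      · exfalso
        obtain ⟨m, hm, rfl⟩ := (hmemQM1 _).mp h
        exact (Finset.mem_sdiff.mp h').2 (CB q' (Finset.mem_sdiff.mp h').1 m hm.1 hm.2 h1.symm)
      · exact hM₁.2.1 q (hQM1M₁ q h) q' (hQM1M₁ q' h') h1
    · intro q hq q' hq' h1
      rcases Finset.mem_union.mp hq with h | h <;> rcases Finset.mem_union.mp hq' with h' | h'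
      · exact hM.2.2 q (Finset.mem_sdiff.mp h).1 q' (Finset.mem_sdiff.mp h').1 h1
      · exfalso
        obtain ⟨m, hm, rfl⟩ := (hmemQM1 _).mp h'
        exact (Finset.mem_sdiff.mp h).2 (CS q (Finset.mem_sdiff.mp h).1 m hm.1 hm.2 h1)
      · exfalso
        obtain ⟨m, hm, rfl⟩ := (hmemQM1 _).mp h
        exact (Finset.mem_sdiff.mp h').2 (CS q' (Finset.mem_sdiff.mp h').1 m hm.1 hm.2 h1.symm)
      · exact hM₁.2.2 q (hQM1M₁ q h) q' (hQM1M₁ q' h') h1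
  have hN2match : IsBipMatching E N2 := by
    refine ⟨?_, ?_, ?_⟩
    · intro q hq
      rcases Finset.mem_union.mp hq with h | h
      · exact hM₁.1 q (Finset.mem_sdiff.mp h).1
      · exact hM.1 q (hQM2M q h)
    · intro q hq q' hq' h1
      rcases Finset.mem_union.mp hq with h | h <;> rcases Finset.mem_union.mp hq' with h' | h'
      · exact hM₁.2.1 q (Finset.mem_sdiff.mp h).1 q' (Finset.mem_sdiff.mp h').1 h1
      · exfalso
        obtain ⟨m, hm, rfl⟩ := (hmemQM2 _).mp h'
        exact (Finset.mem_sdiff.mp h).2 (CB' q (Finset.mem_sdiff.mp h).1 m hm.1 hm.2 h1)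
      · exfalso
        obtain ⟨m, hm, rfl⟩ := (hmemQM2 _).mp h
        exact (Finset.mem_sdiff.mp h').2 (CB' q' (Finset.mem_sdiff.mp h').1 m hm.1 hm.2 h1.symm)
      · exact hM.2.1 q (hQM2M q h) q' (hQM2M q' h') h1
    · intro q hq q' hq' h1
      rcases Finset.mem_union.mp hq with h | h <;> rcases Finset.mem_union.mp hq' with h' | h'
      · exact hM₁.2.2 q (Finset.mem_sdiff.mp h).1 q' (Finset.mem_sdiff.mp h').1 h1
      · exfalso
        obtain ⟨m, hm, rfl⟩ := (hmemQM2 _).mp h'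
        exact (Finset.mem_sdiff.mp h).2 (CS' q (Finset.mem_sdiff.mp h).1 m hm.1 hm.2 h1)
      · exfalso
        obtain ⟨m, hm, rfl⟩ := (hmemQM2 _).mp h
        exact (Finset.mem_sdiff.mp h').2 (CS' q' (Finset.mem_sdiff.mp h').1 m hm.1 hm.2 h1.symm)
      · exact hM.2.2 q (hQM2M q h) q' (hQM2M q' h') h1
  -- N1 leaves i uncovered
  have hN1free : ∀ q ∈ N1, q.1 ≠ i := by
    intro q hq hqi
    rcases Finset.mem_union.mp hq with h | h
    · have heq : q = (i, j) := hM.2.1 q (Finset.mem_sdiff.mp h).1 (i, j) hij hqi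
      apply (Finset.mem_sdiff.mp h).2
      rw [heq, ← hpl]
      exact (hmemQM _).mpr ⟨l, ⟨le_refl l, hevll⟩, rfl⟩
    · obtain ⟨m, hm, rfl⟩ := (hmemQM1 _).mp h
      have h1 := (horO m (by omega) hm.2).1
      have hcc : c m = c (l + 1) := by rw [h1, hqi, hci]
      have := hinj _ _ (by omega) (by omega) hcc
      omega
  -- p (l-1) witnesses that N1 covers j and that N2 ≠ M₁
  have hpl1I₁ : (l - 1) ∈ I₁ := (hmemI₁ _).mpr ⟨by omega, hoddl1⟩
  have hpl1QM1 : p (l - 1) ∈ QM1 := (hmemQM1 _).mpr ⟨l - 1, ⟨by omega, hoddl1⟩, rfl⟩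
  have hN1ne : N1 ≠ Mminus i := by
    intro h
    have hmem : p (l - 1) ∈ N1 := Finset.mem_union_right _ hpl1QM1
    rw [h] at hmem
    exact hjfree _ hmem hpl1j
  have hN2ne : N2 ≠ M₁ := by
    intro h
    have hmem : p (l - 1) ∈ N2 := h.symm ▸ hpl1M₁
    rcases Finset.mem_union.mp hmem with h' | h'
    · exact (Finset.mem_sdiff.mp h').2 hpl1QM1
    · exact hpl1nM (hQM2M _ h')
  -- injectivity on index sets, sum transfer
  have hinjIM : ∀ x ∈ IM, ∀ y ∈ IM, p x = p y → x = y := by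
    intro x hx y hy h
    exact hpinj x ((hmemIM x).mp hx).1 y ((hmemIM y).mp hy).1 h
  have hinjIM' : ∀ x ∈ IM', ∀ y ∈ IM', p x = p y → x = y := by
    intro x hx y hy h
    exact hpinj x (by have := ((hmemIM' x).mp hx).1; omega) y
      (by have := ((hmemIM' y).mp hy).1; omega) h
  have hinjI₁ : ∀ x ∈ I₁, ∀ y ∈ I₁, p x = p y → x = y := by
    intro x hx y hy h
    exact hpinj x (by have := ((hmemI₁ x).mp hx).1; omega) y
      (by have := ((hmemI₁ y).mp hy).1; omega) h
  have hQMsum : ∑ q ∈ QM, (b q.1 - s q.2) = ∑ m ∈ IM, (b (p m).1 - s (p m).2) := by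
    rw [hQMdef]
    exact Finset.sum_image hinjIM
  have hQM1sum : ∑ q ∈ QM1, (b q.1 - s q.2) = ∑ m ∈ I₁, (b (p m).1 - s (p m).2) := by
    rw [hQM1def]
    exact Finset.sum_image hinjI₁
  have hQM1sumφ : ∑ q ∈ QM1, (φ q.1 - s q.2) = ∑ m ∈ I₁, (φ (p m).1 - s (p m).2) := by
    rw [hQM1def]
    exact Finset.sum_image hinjI₁
  have hQM2sumφ : ∑ q ∈ QM2, (φ q.1 - s q.2) = ∑ m ∈ IM', (φ (p m).1 - s (p m).2) := by
    rw [hQM2def]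
    exact Finset.sum_image hinjIM'
  -- IM = insert l IM'
  have hIMsplit : IM = insert l IM' := by
    ext m
    rw [hmemIM, Finset.mem_insert, hmemIM']
    constructor
    · rintro ⟨h1, h2⟩
      rcases Nat.lt_or_ge m l with h | h
      · exact Or.inr ⟨h, h2⟩
      · exact Or.inl (by omega)
    · rintro (rfl | ⟨h1, h2⟩)
      · exact ⟨le_refl _, hevll⟩
      · exact ⟨by omega, h2⟩
  have hlnotIM' : l ∉ IM' := by
    intro h
    have := ((hmemIM' l).mp h).1
    omega
  have hIMsum : ∑ m ∈ IM, (b (p m).1 - s (p m).2) =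
      (b i - s j) + ∑ m ∈ IM', (b (p m).1 - s (p m).2) := by
    rw [hIMsplit, Finset.sum_insert hlnotIM', hpl]
  -- disjointness for the unions
  have hdisj1 : Disjoint (M \ QM) QM1 :=
    Finset.disjoint_left.mpr fun q hq hq1 => hQM1nM q hq1 (Finset.mem_sdiff.mp hq).1
  have hdisj2 : Disjoint (M₁ \ QM1) QM2 :=
    Finset.disjoint_left.mpr fun q hq hq2 => hQM2nM₁ q hq2 (Finset.mem_sdiff.mp hq).1
  have hQM1subM₁ : QM1 ⊆ M₁ := fun q hq => hQM1M₁ q hq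
  -- weight of N1 w.r.t. b
  have esd1 : ∑ q ∈ M \ QM, (b q.1 - s q.2) =
      ∑ q ∈ M, (b q.1 - s q.2) - ∑ q ∈ QM, (b q.1 - s q.2) := by
    rw [eq_sub_iff_add_eq, Finset.sum_sdiff hQMsub]
  have hsum1 : ∑ q ∈ N1, (b q.1 - s q.2) =
      ∑ q ∈ M, (b q.1 - s q.2) - ∑ m ∈ IM, (b (p m).1 - s (p m).2)
        + ∑ m ∈ I₁, (b (p m).1 - s (p m).2) := by
    rw [hN1def, Finset.sum_union hdisj1, esd1, hQMsum, hQM1sum]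
  -- weight of N2 w.r.t. φ
  have esd2 : ∑ q ∈ M₁ \ QM1, (φ q.1 - s q.2) =
      ∑ q ∈ M₁, (φ q.1 - s q.2) - ∑ q ∈ QM1, (φ q.1 - s q.2) := by
    rw [eq_sub_iff_add_eq, Finset.sum_sdiff hQM1subM₁]
  have hsum2 : ∑ q ∈ N2, (φ q.1 - s q.2) =
      ∑ q ∈ M₁, (φ q.1 - s q.2) - ∑ m ∈ I₁, (φ (p m).1 - s (p m).2)
        + ∑ m ∈ IM', (φ (p m).1 - s (p m).2) := by
    rw [hN2def, Finset.sum_union hdisj2, esd2, hQM1sumφ, hQM2sumφ]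
  -- the weight of Mminus i
  have hijnotin : (i, j) ∉ Mminus i := fun h => hMmfree i _ h rfl
  have hins : IsBipMatching E (insert (i, j) (Mminus i)) := by
    refine ⟨?_, ?_, ?_⟩
    · intro q hq
      rcases Finset.mem_insert.mp hq with rfl | h
      · exact hM.1 _ hij
      · exact (hMm i).1 q h
    · intro q hq q' hq' h1
      rcases Finset.mem_insert.mp hq with rfl | h <;> rcases Finset.mem_insert.mp hq' with rfl | h'
      · rfl
      · exact absurd h1.symm (hMmfree i q' h')
      · exact absurd h1 (hMmfree i q h)
      · exact (hMm i).2.1 q h q' h' h1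
    · intro q hq q' hq' h1
      rcases Finset.mem_insert.mp hq with rfl | h <;> rcases Finset.mem_insert.mp hq' with rfl | h'
      · rfl
      · exact absurd h1.symm (hjfree q' h')
      · exact absurd h1 (hjfree q h)
      · exact (hMm i).2.2 q h q' h' h1
  have h2 := hMmax _ hins
  rw [bnw_eq, bnw_eq, Finset.sum_insert hijnotin] at h2
  have h2' : (b i - s j) + ∑ q ∈ Mminus i, (b q.1 - s q.2) ≤
      ∑ q ∈ M, (b q.1 - s q.2) := h2
  have herase : IsBipMatching E (M.erase (i, j)) := bip_subset hM (Finset.erase_subset _ _)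
  have heraseFree : ∀ q ∈ M.erase (i, j), q.1 ≠ i := by
    intro q hq hqi
    have heq : q = (i, j) := hM.2.1 q (Finset.mem_of_mem_erase hq) (i, j) hij hqi
    exact (Finset.mem_erase.mp hq).1 heq
  have h3 := hMmmax i _ herase heraseFree
  rw [bnw_eq, bnw_eq] at h3
  have h4 : ∑ q ∈ M.erase (i, j), (b q.1 - s q.2) + (b i - s j) =
      ∑ q ∈ M, (b q.1 - s q.2) :=
    Finset.sum_erase_add M (fun q : B × S => b q.1 - s q.2) hij
  have hwMminus : ∑ q ∈ Mminus i, (b q.1 - s q.2) =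
      ∑ q ∈ M, (b q.1 - s q.2) - (b i - s j) := by
    linarith
  -- the first strict inequality
  have hle1 := hMmmax i N1 hN1match hN1free
  have hne1 : bipNodeWeight (Sum.elim b fun j => -s j) N1 ≠
      bipNodeWeight (Sum.elim b fun j => -s j) (Mminus i) :=
    fun h => hN1ne (hMmuniq i N1 hN1match hN1free h)
  have hlt1 := lt_of_le_of_ne hle1 hne1
  rw [bnw_eq, bnw_eq, hsum1, hwMminus] at hlt1
  have star1 : ∑ m ∈ I₁, (b (p m).1 - s (p m).2) <
      ∑ m ∈ IM', (b (p m).1 - s (p m).2) := by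
    rw [hIMsum] at hlt1
    linarith
  -- the second strict inequality
  have hle2 := hM₁max N2 hN2match
  have hne2 : bipNodeWeight (Sum.elim φ fun j => -s j) N2 ≠
      bipNodeWeight (Sum.elim φ fun j => -s j) M₁ :=
    fun h => hN2ne (hM₁uniq N2 hN2match h)
  have hlt2 := lt_of_le_of_ne hle2 hne2
  rw [bnw_eq, bnw_eq, hsum2] at hlt2
  have star2 : ∑ m ∈ IM', (φ (p m).1 - s (p m).2) <
      ∑ m ∈ I₁, (φ (p m).1 - s (p m).2) := by
    linarith
  -- the surplus comparison
  have hbuyeq : ∀ m ∈ IM', (p m).1 = (p (m + 1)).1 := by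
    intro m hm
    obtain ⟨hml, hev⟩ := (hmemIM' m).mp hm
    have h1 := horE m (by omega) hev
    have hodd : ¬ Even (l + (m + 1)) := by
      rw [Nat.even_iff] at hev ⊢
      omega
    have h2 := horO (m + 1) (by omega) hodd
    exact Sum.inl.inj (h1.2.symm.trans h2.1)
  have hmapsub : IM'.image (· + 1) ⊆ I₁ := by
    intro m hm
    obtain ⟨m', hm', rfl⟩ := Finset.mem_image.mp hm
    obtain ⟨hml, hev⟩ := (hmemIM' m').mp hm'
    refine (hmemI₁ _).mpr ⟨?_, ?_⟩
    · rcases Nat.lt_or_ge (m' + 1) l with h | h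
      · exact h
      · exfalso
        have : m' + 1 = l := by omega
        rw [Nat.even_iff] at hev
        omega
    · rw [Nat.even_iff] at hev ⊢
      omega
  have he : ∑ m ∈ IM', (b (p m).1 - φ (p m).1) ≤
      ∑ m ∈ I₁, (b (p m).1 - φ (p m).1) := by
    have e1 : ∑ m ∈ IM', (b (p m).1 - φ (p m).1) =
        ∑ m ∈ IM'.image (· + 1), (b (p m).1 - φ (p m).1) := by
      rw [Finset.sum_image (by intro x _ y _ h; simp only at h; omega)]
      exact Finset.sum_congr rfl fun m hm => by rw [hbuyeq m hm]
    rw [e1]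
    exact Finset.sum_le_sum_of_subset_of_nonneg hmapsub
      fun m _ _ => sub_nonneg.mpr (hφ _)
  have d1 : ∑ m ∈ IM', (b (p m).1 - φ (p m).1) =
      ∑ m ∈ IM', (b (p m).1 - s (p m).2) - ∑ m ∈ IM', (φ (p m).1 - s (p m).2) := by
    rw [← Finset.sum_sub_distrib]
    exact Finset.sum_congr rfl fun m _ => by ring
  have d2 : ∑ m ∈ I₁, (b (p m).1 - φ (p m).1) =
      ∑ m ∈ I₁, (b (p m).1 - s (p m).2) - ∑ m ∈ I₁, (φ (p m).1 - s (p m).2) := by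
    rw [← Finset.sum_sub_distrib]
    exact Finset.sum_congr rfl fun m _ => by ring
  linarith

/-- **Internal sellers of alternating paths remain matched after removing their partner.**
With node weights `W i = b i`, `W j = -s j` and `W₁ i = φ i` (where `φ i ≤ b i`),
`W₁ j = -s j`, let `M` be the unique maximum node-based-weight matching w.r.t. `W`, `M₁` the
unique maximum node-based-weight matching w.r.t. `W₁`, and for every buyer `i` let
`Mminus i` be the unique maximum-weight (w.r.t. `W`) matching among matchings leaving `i`
uncovered. If `A = (c 0, ..., c k)` is a maximal alternating path of `M ∪ M₁` that is not a
cycle, `j` is a seller on `A` that is not an endpoint of `A`, and `i` is the buyer with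
`(i,j) ∈ M`, then `j` is covered by `Mminus i`. -/
theorem internal_seller_stays_matched
    {B S : Type*} [Fintype B] [Fintype S] [DecidableEq B] [DecidableEq S]
    (E : B → S → Prop) (b : B → ℝ) (s : S → ℝ) (φ : B → ℝ)
    (hφ : ∀ i, φ i ≤ b i)
    (M M₁ : Finset (B × S))
    (hM : IsBipMatching E M) (hM₁ : IsBipMatching E M₁)
    (hMmax : ∀ N, IsBipMatching E N →
      bipNodeWeight (Sum.elim b fun j => -s j) N ≤ bipNodeWeight (Sum.elim b fun j => -s j) M)
    (hMuniq : ∀ N, IsBipMatching E N →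
      bipNodeWeight (Sum.elim b fun j => -s j) N = bipNodeWeight (Sum.elim b fun j => -s j) M →
      N = M)
    (hM₁max : ∀ N, IsBipMatching E N →
      bipNodeWeight (Sum.elim φ fun j => -s j) N ≤ bipNodeWeight (Sum.elim φ fun j => -s j) M₁)
    (hM₁uniq : ∀ N, IsBipMatching E N →
      bipNodeWeight (Sum.elim φ fun j => -s j) N = bipNodeWeight (Sum.elim φ fun j => -s j) M₁ →
      N = M₁)
    (Mminus : B → Finset (B × S))
    (hMm : ∀ i, IsBipMatching E (Mminus i))
    (hMmfree : ∀ i, ∀ p ∈ Mminus i, p.1 ≠ i)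
    (hMmmax : ∀ i, ∀ N, IsBipMatching E N → (∀ p ∈ N, p.1 ≠ i) →
      bipNodeWeight (Sum.elim b fun j => -s j) N ≤
        bipNodeWeight (Sum.elim b fun j => -s j) (Mminus i))
    (hMmuniq : ∀ i, ∀ N, IsBipMatching E N → (∀ p ∈ N, p.1 ≠ i) →
      bipNodeWeight (Sum.elim b fun j => -s j) N =
        bipNodeWeight (Sum.elim b fun j => -s j) (Mminus i) → N = Mminus i)
    (k : ℕ) (hk : 1 ≤ k) (c : ℕ → B ⊕ S)
    (hinj : ∀ l l', l ≤ k → l' ≤ k → c l = c l' → l = l')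
    (hpath : ∀ l < k, EdgeBetween (M ∪ M₁) (c l) (c (l + 1)))
    (hmax0 : ∀ v, EdgeBetween (M ∪ M₁) (c 0) v → v = c 1)
    (hmaxk : ∀ v, EdgeBetween (M ∪ M₁) (c k) v → v = c (k - 1))
    (j : S) (hjon : ∃ l, 0 < l ∧ l < k ∧ c l = Sum.inr j)
    (i : B) (hij : (i, j) ∈ M) :
    ∃ p ∈ Mminus i, p.2 = j := by
  classical
  by_contra hcon
  push_neg at hcon
  obtain ⟨l, hl, hlk, hcl⟩ := hjon
  -- determine the buyer-side neighbour of j on the path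
  obtain ⟨q, hq, hqor⟩ := hpath l hlk
  have hql : c (l + 1) = Sum.inl q.1 ∧ c l = Sum.inr q.2 := by
    rcases hqor with ⟨h1, h2⟩ | ⟨h1, h2⟩
    · rw [hcl] at h1
      simp at h1
    · exact ⟨h1, h2⟩
  obtain ⟨q', hq', hq'or⟩ := hpath (l - 1) (by omega)
  rw [Nat.sub_add_cancel hl] at hq'or
  have hq'l : c (l - 1) = Sum.inl q'.1 ∧ c l = Sum.inr q'.2 := by
    rcases hq'or with ⟨h1, h2⟩ | ⟨h1, h2⟩
    · exact ⟨h1, h2⟩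
    · rw [hcl] at h1
      simp at h1
  have hq2 : q.2 = j := Sum.inr.inj (hql.2.symm.trans hcl)
  have hq'2 : q'.2 = j := Sum.inr.inj (hq'l.2.symm.trans hcl)
  have hne : c (l + 1) ≠ c (l - 1) := by
    intro h
    have := hinj _ _ (by omega) (by omega) h
    omega
  have hcase : c (l + 1) = Sum.inl i ∨ c (l - 1) = Sum.inl i := by
    rcases Finset.mem_union.mp hq with hqM | hqM₁
    · left
      have heq : q = (i, j) := hM.2.2 q hqM (i, j) hij hq2
      rw [hql.1, heq]
    · rcases Finset.mem_union.mp hq' with hq'M | hq'M₁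
      · right
        have heq : q' = (i, j) := hM.2.2 q' hq'M (i, j) hij hq'2
        rw [hq'l.1, heq]
      · exfalso
        have heq : q = q' := hM₁.2.2 q hqM₁ q' hq'M₁ (by rw [hq2, hq'2])
        apply hne
        rw [hql.1, hq'l.1, heq]
  rcases hcase with hci | hci
  · exact aux_main E b s φ hφ M M₁ hM hM₁ hMmax hM₁max hM₁uniq Mminus hMm hMmfree hMmmax
      hMmuniq k l c hinj hpath hmax0 j i hij hl hlk hcl hci hcon
  · refine aux_main E b s φ hφ M M₁ hM hM₁ hMmax hM₁max hM₁uniq Mminus hMm hMmfree hMmmax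
      hMmuniq k (k - l) (fun m => c (k - m)) ?_ ?_ ?_ j i hij (by omega) (by omega) ?_ ?_ hcon
    · intro a a' ha ha' h
      have := hinj (k - a) (k - a') (by omega) (by omega) h
      omega
    · intro m hm
      have h1 := hpath (k - m - 1) (by omega)
      have h2 : k - m - 1 + 1 = k - m := by omega
      rw [h2] at h1
      have h3 : k - (m + 1) = k - m - 1 := by omega
      show EdgeBetween (M ∪ M₁) (c (k - m)) (c (k - (m + 1)))
      rw [h3]
      exact edgeBetween_symm h1
    · intro v hv
      exact hmaxk v hv
    · have h5 : k - (k - l) = l := by omega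
      show c (k - (k - l)) = Sum.inr j
      rw [h5]
      exact hcl
    · have h6 : k - (k - l + 1) = l - 1 := by omega
      show c (k - (k - l + 1)) = Sum.inl i
      rw [h6]
      exact hci
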